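/- Let t0 ≠ 0 and let λ be meromorphic at t0 with a pole at t0, solving the Painlevé III' equation with parameters χ0, χ∞ on a punctured neighborhood of t0. Then the pole is simple and its residue r satisfies r² = t0². -/

import Mathlib

set_option maxHeartbeats 1000000
open Filter Topology

lemma analyticAt_deriv' (f : ℂ → ℂ) (x : ℂ) (h : AnalyticAt ℂ f x) : AnalyticAt ℂ (deriv f) x := by
  obtain ⟨U, hU, hf⟩ := h.eventually_analyticAt.exists_mem
  exact (AnalyticOnNhd.deriv (fun y hy => hf y hy)) x (mem_of_mem_nhds hU)

lemma ev_ev (t0 : ℂ) (S : Set ℂ) (hS : ∀ᶠ t in 𝓝[≠] t0, t ∈ S) :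
    ∀ᶠ t in 𝓝[≠] t0, ∀ᶠ y in 𝓝 t, y ∈ S := by
  obtain ⟨U, hUo, hU0, hsub⟩ := mem_nhdsWithin.mp hS
  have hmem : U ∩ {t0}ᶜ ∈ 𝓝[≠] t0 := mem_nhdsWithin.mpr ⟨U, hUo, hU0, fun x hx => hx⟩
  filter_upwards [hmem] with t ht
  filter_upwards [((hUo.inter isOpen_compl_singleton).mem_nhds ht)] with y hy using hsub hy

lemma deriv_of_pole (t0 : ℂ) (F l : ℂ → ℂ) (hF : AnalyticAt ℂ F t0) (k : ℕ)
    (h : ∀ᶠ t in 𝓝[≠] t0, l t = F t / (t - t0) ^ (k + 1)) :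
    ∀ᶠ t in 𝓝[≠] t0, deriv l t
      = (deriv F t * (t - t0) - ((k : ℂ) + 1) * F t) / (t - t0) ^ (k + 2) := by
  have h2 := ev_ev t0 {t | l t = F t / (t - t0) ^ (k + 1)} h
  filter_upwards [h2, (hF.eventually_analyticAt).filter_mono nhdsWithin_le_nhds,
    self_mem_nhdsWithin] with t ht hFt hne
  have hs : t - t0 ≠ 0 := sub_ne_zero.mpr hne
  have hD : HasDerivAt (fun y => F y / (y - t0) ^ (k + 1))
      ((deriv F t * (t - t0) ^ (k + 1) - F t * ((((k:ℕ)+1 : ℕ) : ℂ) * (t - t0) ^ k * 1))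
        / ((t - t0) ^ (k + 1)) ^ 2) t := by
    exact (hFt.differentiableAt.hasDerivAt).div
      (((hasDerivAt_id t).sub_const t0).pow (k + 1)) (pow_ne_zero _ hs)
  rw [Filter.EventuallyEq.deriv_eq ht, hD.deriv]
  field_simp
  push_cast
  ring

lemma lim_eq_zero (t0 : ℂ) (F : ℂ → ℂ) (v : ℂ) (hc : ContinuousAt F t0) (hv : F t0 = v)
    (h0 : ∀ᶠ t in 𝓝[≠] t0, F t = 0) : v = 0 := by
  have h1 : Filter.Tendsto F (𝓝[≠] t0) (𝓝 v) :=
    hv ▸ hc.tendsto.mono_left nhdsWithin_le_nhds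
  have h2 : Filter.Tendsto F (𝓝[≠] t0) (𝓝 0) :=
    tendsto_const_nhds.congr' (by filter_upwards [h0] with t ht; exact ht.symm)
  exact tendsto_nhds_unique h1 h2



/-- The Painlevé III' equation with parameters `χ0`, `χ∞`, stated at a point `t`. -/
def PIIIp (χ0 χinf : ℂ) (l : ℂ → ℂ) (t : ℂ) : Prop :=
  deriv (deriv l) t =
    (deriv l t) ^ 2 / l t - deriv l t / t - χinf * (l t) ^ 2 / t ^ 2
      + (l t) ^ 3 / t ^ 2 + χ0 / t - 1 / l t

/-- Poles of third Painlevé transcendents are simple, with residue `±t0`.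
The pole of order `n ≥ 1` at `t0` is encoded by `l = g/(t-t0)^n` near `t0`
with `g` analytic and nonvanishing at `t0`. -/
theorem stmt15 (t0 χ0 χinf : ℂ) (ht0 : t0 ≠ 0) (l g : ℂ → ℂ) (n : ℕ) (hn : 0 < n)
    (hg : AnalyticAt ℂ g t0) (hg0 : g t0 ≠ 0)
    (hpole : ∀ᶠ t in nhdsWithin t0 {t0}ᶜ, l t = g t / (t - t0) ^ n)
    (heq : ∀ᶠ t in nhdsWithin t0 {t0}ᶜ, PIIIp χ0 χinf l t) :
    n = 1 ∧ ∃ r : ℂ,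
      Filter.Tendsto (fun t => (t - t0) * l t) (nhdsWithin t0 {t0}ᶜ) (nhds r) ∧
      r ^ 2 = t0 ^ 2 := by
  obtain ⟨k, rfl⟩ : ∃ k, n = k + 1 := ⟨n - 1, (Nat.succ_pred_eq_of_pos hn).symm⟩
  set G1 : ℂ → ℂ := fun t => deriv g t * (t - t0) - ((k : ℂ) + 1) * g t with hG1def
  have hidsub : AnalyticAt ℂ (fun t => t - t0) t0 := analyticAt_id.sub analyticAt_const
  have hG1a : AnalyticAt ℂ G1 t0 :=
    ((analyticAt_deriv' g t0 hg).mul hidsub).sub (analyticAt_const.mul hg)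
  set G2 : ℂ → ℂ := fun t => deriv G1 t * (t - t0) - ((k : ℂ) + 2) * G1 t with hG2def
  have hG2a : AnalyticAt ℂ G2 t0 :=
    ((analyticAt_deriv' G1 t0 hG1a).mul hidsub).sub (analyticAt_const.mul hG1a)
  have hd1 : ∀ᶠ t in 𝓝[≠] t0, deriv l t = G1 t / (t - t0) ^ (k + 2) :=
    deriv_of_pole t0 g l hg k hpole
  have hd2 : ∀ᶠ t in 𝓝[≠] t0, deriv (deriv l) t = G2 t / (t - t0) ^ (k + 3) := by
    filter_upwards [deriv_of_pole t0 G1 (deriv l) hG1a (k + 1) hd1] with t ht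
    rw [ht]; congr 1; push_cast; ring
  have ha1 : G1 t0 = -((k : ℂ) + 1) * g t0 := by
    show deriv g t0 * (t0 - t0) - _ = _; ring
  have ha2 : G2 t0 = ((k : ℂ) + 2) * ((k : ℂ) + 1) * g t0 := by
    show deriv G1 t0 * (t0 - t0) - ((k : ℂ) + 2) * G1 t0 = _; rw [ha1]; ring
  have hse : ∀ᶠ t in 𝓝[≠] t0, t ≠ t0 := self_mem_nhdsWithin
  have hte : ∀ᶠ t in 𝓝[≠] t0, t ≠ 0 :=
    (isOpen_compl_singleton.eventually_mem (by simpa using ht0)).filter_mono nhdsWithin_le_nhds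
  have hge : ∀ᶠ t in 𝓝[≠] t0, g t ≠ 0 :=
    (hg.continuousAt.eventually_ne hg0).filter_mono nhdsWithin_le_nhds
  have c1 : ContinuousAt G1 t0 := hG1a.continuousAt
  have c2 : ContinuousAt G2 t0 := hG2a.continuousAt
  have c3 : ContinuousAt g t0 := hg.continuousAt
  have ht2 : (t0 : ℂ) ^ 2 ≠ 0 := pow_ne_zero _ ht0
  rcases k with _ | k2
  · -- n = 1
    have hΨ0 : ∀ᶠ t in 𝓝[≠] t0, G2 t - ((G1 t)^2 / g t - (t - t0) * G1 t / t
        - χinf * (t - t0) * (g t)^2 / t^2 + (g t)^3 / t^2 + χ0 * (t - t0)^3 / t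
        - (t - t0)^4 / g t) = 0 := by
      filter_upwards [hpole, hd1, hd2, heq, hse, hte, hge] with t hl h1 h2 hP hne ht' hgt
      have hs : t - t0 ≠ 0 := sub_ne_zero.mpr hne
      have hlt : l t ≠ 0 := by
        rw [hl]; exact div_ne_zero hgt (pow_ne_zero _ hs)
      have eA : g t = (t - t0) * l t := by rw [hl]; field_simp; ring
      have eB : G1 t = (t - t0) ^ 2 * deriv l t := by rw [h1]; field_simp
      have eC : G2 t = (t - t0) ^ 3 * deriv (deriv l) t := by rw [h2]; field_simp
      rw [PIIIp] at hP
      rw [eA, eB, eC, hP]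
      set s := t - t0 with hsdef
      set L := l t with hL
      set D := deriv l t with hD
      clear_value s L D
      rw [show (s^2*D)^2/(s*L) = s^3*(D^2/L) by field_simp,
          show s*(s^2*D)/t = s^3*(D/t) by field_simp,
          show χinf*s*(s*L)^2/t^2 = s^3*(χinf*L^2/t^2) by field_simp,
          show (s*L)^3/t^2 = s^3*(L^3/t^2) by field_simp,
          show χ0*s^3/t = s^3*(χ0/t) by field_simp,
          show s^4/(s*L) = s^3*(1/L) by field_simp]
      ring
    have hv0 : G2 t0 - ((G1 t0)^2 / g t0 + (g t0)^3 / t0^2) = 0 := by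
      refine lim_eq_zero t0 _ _ ?_ ?_ hΨ0
      · fun_prop (disch := assumption)
      · simp [sub_self]
    rw [ha1, ha2] at hv0
    push_cast at hv0
    have hkey : g t0 ^ 2 * (g t0 ^ 2 - t0 ^ 2) = 0 := by
      field_simp at hv0
      linear_combination -(g t0) * hv0
    have hr2 : g t0 ^ 2 = t0 ^ 2 := by
      rcases mul_eq_zero.mp hkey with h3 | h3
      · exact absurd (pow_eq_zero_iff (by norm_num) |>.mp h3) hg0
      · exact sub_eq_zero.mp h3
    refine ⟨rfl, g t0, ?_, hr2⟩
    have hev : (fun t => (t - t0) * l t) =ᶠ[𝓝[≠] t0] g := by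
      filter_upwards [hpole, hse] with t hl hne
      have hs : t - t0 ≠ 0 := sub_ne_zero.mpr hne
      rw [hl]; field_simp; ring
    exact Filter.Tendsto.congr' hev.symm (c3.tendsto.mono_left nhdsWithin_le_nhds)
  · -- n = k2 + 2 ≥ 2 : contradiction
    exfalso
    have hΦ0 : ∀ᶠ t in 𝓝[≠] t0, ((t-t0)^k2)^2*(t-t0)^2*G2 t
        - (((t-t0)^k2)^2*(t-t0)^2*(G1 t)^2/g t - ((t-t0)^k2)^2*(t-t0)^3*G1 t/t
          - χinf*((t-t0)^k2)*(t-t0)^2*(g t)^2/t^2 + (g t)^3/t^2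
          + χ0*((t-t0)^k2)^3*(t-t0)^6/t - ((t-t0)^k2)^4*(t-t0)^8/g t) = 0 := by
      filter_upwards [hpole, hd1, hd2, heq, hse, hte, hge] with t hl h1 h2 hP hne ht' hgt
      have hs : t - t0 ≠ 0 := sub_ne_zero.mpr hne
      have hlt : l t ≠ 0 := by
        rw [hl]; exact div_ne_zero hgt (pow_ne_zero _ hs)
      have eA : g t = ((t - t0)^k2 * (t - t0) ^ 2) * l t := by
        rw [hl, ← pow_add]; field_simp
      have eB : G1 t = ((t - t0)^k2 * (t - t0) ^ 3) * deriv l t := by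
        rw [h1, ← pow_add]; field_simp
      have eC : G2 t = ((t - t0)^k2 * (t - t0) ^ 4) * deriv (deriv l) t := by
        rw [h2, ← pow_add]; field_simp
      rw [PIIIp] at hP
      rw [eA, eB, eC, hP]
      set s := t - t0 with hsdef
      set L := l t with hL
      set D := deriv l t with hD
      clear_value s L D
      have hq0 : s ^ k2 ≠ 0 := pow_ne_zero _ hs
      generalize hq : s ^ k2 = q at hq0 ⊢
      rw [show q^2*s^2*(q*s^3*D)^2/(q*s^2*L) = q^3*s^6*(D^2/L) by field_simp,
          show q^2*s^3*(q*s^3*D)/t = q^3*s^6*(D/t) by field_simp,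
          show χinf*q*s^2*(q*s^2*L)^2/t^2 = q^3*s^6*(χinf*L^2/t^2) by field_simp,
          show (q*s^2*L)^3/t^2 = q^3*s^6*(L^3/t^2) by field_simp,
          show χ0*q^3*s^6/t = q^3*s^6*(χ0/t) by field_simp,
          show q^4*s^8/(q*s^2*L) = q^3*s^6*(1/L) by field_simp]
      ring
    have hv0 : (0 : ℂ) - (g t0)^3 / t0^2 = 0 := by
      refine lim_eq_zero t0 _ _ ?_ ?_ hΦ0
      · fun_prop (disch := assumption)
      · simp [sub_self]
    have h3 : (g t0) ^ 3 = 0 := by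
      rw [zero_sub, neg_eq_zero, div_eq_zero_iff] at hv0
      tauto
    exact hg0 (pow_eq_zero_iff (by norm_num) |>.mp h3)
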